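/- Every nonempty subset S of ℤ^n has only finitely many minimal elements with respect to the conformal order ⊑, where x ⊑ y iff for all i, x_i·y_i ≥ 0 and |x_i| ≤ |y_i|. -/

import Mathlib

/-- The conformal order on `ℤ^n`: `x ⊑ y` iff `x` and `y` lie in the same
orthant and `x` is componentwise dominated by `y` in absolute value. -/
def ConformalLE (n : ℕ) (x y : Fin n → ℤ) : Prop :=
  ∀ i, 0 ≤ x i * y i ∧ |x i| ≤ |y i|

lemma conf_key (a b : ℤ) :
    (0 ≤ a * b ∧ |a| ≤ |b|) ↔ (a.toNat ≤ b.toNat ∧ (-a).toNat ≤ (-b).toNat) := by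
  constructor
  · rintro ⟨h1, h2⟩
    rcases le_or_gt 0 a with ha | ha <;> rcases le_or_gt 0 b with hb | hb
    · rw [abs_of_nonneg ha, abs_of_nonneg hb] at h2; omega
    · have : a = 0 := by nlinarith
      omega
    · have hb0 : b = 0 := by nlinarith
      subst hb0
      simp only [abs_zero, abs_nonpos_iff] at h2
      omega
    · rw [abs_of_neg ha, abs_of_neg hb] at h2; omega
  · rintro ⟨h1, h2⟩
    rcases le_or_gt 0 a with ha | ha <;> rcases le_or_gt 0 b with hb | hb
    · rw [abs_of_nonneg ha, abs_of_nonneg hb]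
      exact ⟨mul_nonneg ha hb, by omega⟩
    · have : a = 0 := by omega
      subst this; simp
    · omega
    · rw [abs_of_neg ha, abs_of_neg hb]
      exact ⟨(mul_pos_of_neg_of_neg ha hb).le, by omega⟩

theorem stmt5 (n : ℕ) (S : Set (Fin n → ℤ)) (hS : S.Nonempty) :
    {x ∈ S | ∀ y ∈ S, ConformalLE n y x → y = x}.Finite := by
  set M := {x ∈ S | ∀ y ∈ S, ConformalLE n y x → y = x}
  set φ : (Fin n → ℤ) → (Fin n × Bool → ℕ) :=
    fun x p => if p.2 then (x p.1).toNat else (-(x p.1)).toNat with hφ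
  have hinj : Function.Injective φ := by
    intro x y hxy
    funext i
    have h1 := congrFun hxy (i, true)
    have h2 := congrFun hxy (i, false)
    simp [hφ] at h1 h2
    omega
  have hle : ∀ x y : Fin n → ℤ, ConformalLE n x y ↔ φ x ≤ φ y := by
    intro x y
    constructor
    · intro h p
      rcases p with ⟨i, b⟩
      have := (conf_key (x i) (y i)).1 (h i)
      cases b <;> simp [hφ] <;> omega
    · intro h i
      exact (conf_key (x i) (y i)).2
        ⟨by simpa [hφ] using h (i, true), by simpa [hφ] using h (i, false)⟩
  have hanti : IsAntichain (· ≤ ·) (φ '' M) := by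
    rintro _ ⟨y, hy, rfl⟩ _ ⟨x, hx, rfl⟩ hne hle'
    exact hne (congrArg φ (hx.2 y hy.1 ((hle y x).2 hle')))
  have hpwo : Set.IsPWO (φ '' M) := Set.isPWO_of_wellQuasiOrderedLE (φ '' M)
  have hfin : (φ '' M).Finite := hanti.finite_of_partiallyWellOrderedOn hpwo
  exact (hfin.of_finite_image (hinj.injOn)).subset (by simp)
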